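/- Fix (Θ, B). The variational objective J_q(Θ, B, M, S) is concave in (M, S) on the set where all entries of S are positive, for any convex function b. -/
import Mathlib


open MeasureTheory ProbabilityTheory Real

/-- Proposition 1 of the paper (second half): for fixed model parameters `(Θ, B)`, the
variational objective `J_q(Θ, B, M, S)` is concave in `(M, S)` on the set where all entries
of `S` are positive, for any convex `b`. -/
theorem variational_objective_concave_in_M_S {n p d q : ℕ}
    (Y O : Fin n → Fin p → ℝ) (X : Fin n → Fin d → ℝ)
    (Θ : Fin p → Fin d → ℝ) (B : Fin p → Fin q → ℝ)
    (bfun : ℝ → ℝ) (hb : ConvexOn ℝ Set.univ bfun) (KY : ℝ)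
    (γ : Measure (Fin q → ℝ)) (hγ : γ = Measure.pi fun _ => gaussianReal 0 1)
    (hint : ∀ (M S : Fin n → Fin q → ℝ) (i : Fin n) (j : Fin p),
      Integrable (fun u =>
        bfun (O i j + ∑ k, X i k * Θ j k + ∑ k, (M i k + S i k * u k) * B j k)) γ) :
    ConcaveOn ℝ {P : (Fin n → Fin q → ℝ) × (Fin n → Fin q → ℝ) | ∀ i k, 0 < P.2 i k}
      (fun P : (Fin n → Fin q → ℝ) × (Fin n → Fin q → ℝ) =>
        (∑ i, ∑ j,
          (Y i j * (O i j + ∑ k, X i k * Θ j k + ∑ k, P.1 i k * B j k) -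
            ∫ u, bfun (O i j + ∑ k, X i k * Θ j k +
              ∑ k, (P.1 i k + P.2 i k * u k) * B j k) ∂γ)) -
        (1 / 2) * (∑ i, ∑ k, ((P.1 i k) ^ 2 + (P.2 i k) ^ 2 - 2 * Real.log (P.2 i k) - 1)) -
        KY) := by
  constructor
  · intro x hx y hy a c ha hc hac i k
    simp only [Set.mem_setOf_eq] at hx hy
    simp only [Prod.snd_add, Prod.smul_snd, Pi.add_apply, Pi.smul_apply, smul_eq_mul]
    rcases eq_or_lt_of_le ha with h | h
    · have hc1 : c = 1 := by linarith
      rw [← h, hc1]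
      simpa using hy i k
    · nlinarith [mul_nonneg hc (hy i k).le, hx i k]
  · intro P hP Q hQ a c ha hc hac
    simp only [Set.mem_setOf_eq] at hP hQ
    simp only [Prod.fst_add, Prod.snd_add, Prod.smul_fst, Prod.smul_snd,
      Pi.add_apply, Pi.smul_apply, smul_eq_mul]
    have hterm : ∀ (i : Fin n) (j : Fin p),
        a * (Y i j * (O i j + ∑ k, X i k * Θ j k + ∑ k, P.1 i k * B j k) -
              ∫ u, bfun (O i j + ∑ k, X i k * Θ j k +
                ∑ k, (P.1 i k + P.2 i k * u k) * B j k) ∂γ) +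
        c * (Y i j * (O i j + ∑ k, X i k * Θ j k + ∑ k, Q.1 i k * B j k) -
              ∫ u, bfun (O i j + ∑ k, X i k * Θ j k +
                ∑ k, (Q.1 i k + Q.2 i k * u k) * B j k) ∂γ)
        ≤ Y i j * (O i j + ∑ k, X i k * Θ j k +
              ∑ k, (a * P.1 i k + c * Q.1 i k) * B j k) -
            ∫ u, bfun (O i j + ∑ k, X i k * Θ j k +
              ∑ k, (a * P.1 i k + c * Q.1 i k + (a * P.2 i k + c * Q.2 i k) * u k) * B j k) ∂γ := by
      intro i j
      have hlin : ∑ k, (a * P.1 i k + c * Q.1 i k) * B j k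
          = a * ∑ k, P.1 i k * B j k + c * ∑ k, Q.1 i k * B j k := by
        rw [Finset.mul_sum, Finset.mul_sum, ← Finset.sum_add_distrib]
        exact Finset.sum_congr rfl fun k _ => by ring
      have hIP := hint P.1 P.2 i j
      have hIQ := hint Q.1 Q.2 i j
      have hIR : Integrable (fun u => bfun (O i j + ∑ k, X i k * Θ j k +
          ∑ k, (a * P.1 i k + c * Q.1 i k + (a * P.2 i k + c * Q.2 i k) * u k) * B j k)) γ :=
        hint (fun i k => a * P.1 i k + c * Q.1 i k)
          (fun i k => a * P.2 i k + c * Q.2 i k) i j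
      have hptwise : ∀ u : Fin q → ℝ,
          bfun (O i j + ∑ k, X i k * Θ j k +
            ∑ k, (a * P.1 i k + c * Q.1 i k + (a * P.2 i k + c * Q.2 i k) * u k) * B j k)
          ≤ a * bfun (O i j + ∑ k, X i k * Θ j k + ∑ k, (P.1 i k + P.2 i k * u k) * B j k)
          + c * bfun (O i j + ∑ k, X i k * Θ j k + ∑ k, (Q.1 i k + Q.2 i k * u k) * B j k) := by
        intro u
        have hsum : ∑ k, (a * P.1 i k + c * Q.1 i k + (a * P.2 i k + c * Q.2 i k) * u k) * B j k
            = a * ∑ k, (P.1 i k + P.2 i k * u k) * B j k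
            + c * ∑ k, (Q.1 i k + Q.2 i k * u k) * B j k := by
          rw [Finset.mul_sum, Finset.mul_sum, ← Finset.sum_add_distrib]
          exact Finset.sum_congr rfl fun k _ => by ring
        have harg : O i j + ∑ k, X i k * Θ j k +
            ∑ k, (a * P.1 i k + c * Q.1 i k + (a * P.2 i k + c * Q.2 i k) * u k) * B j k
            = a * (O i j + ∑ k, X i k * Θ j k + ∑ k, (P.1 i k + P.2 i k * u k) * B j k)
            + c * (O i j + ∑ k, X i k * Θ j k + ∑ k, (Q.1 i k + Q.2 i k * u k) * B j k) := by
          rw [hsum]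
          linear_combination (O i j + ∑ k, X i k * Θ j k) * hac.symm
        rw [harg]
        simpa [smul_eq_mul] using
          hb.2 (Set.mem_univ _) (Set.mem_univ _) ha hc hac
      have h1 : ∫ u, bfun (O i j + ∑ k, X i k * Θ j k +
            ∑ k, (a * P.1 i k + c * Q.1 i k + (a * P.2 i k + c * Q.2 i k) * u k) * B j k) ∂γ
          ≤ ∫ u, (a * bfun (O i j + ∑ k, X i k * Θ j k + ∑ k, (P.1 i k + P.2 i k * u k) * B j k)
            + c * bfun (O i j + ∑ k, X i k * Θ j k + ∑ k, (Q.1 i k + Q.2 i k * u k) * B j k)) ∂γ :=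
        integral_mono hIR ((hIP.const_mul a).add (hIQ.const_mul c)) hptwise
      have h2 : ∫ u, (a * bfun (O i j + ∑ k, X i k * Θ j k + ∑ k, (P.1 i k + P.2 i k * u k) * B j k)
            + c * bfun (O i j + ∑ k, X i k * Θ j k + ∑ k, (Q.1 i k + Q.2 i k * u k) * B j k)) ∂γ
          = a * ∫ u, bfun (O i j + ∑ k, X i k * Θ j k +
              ∑ k, (P.1 i k + P.2 i k * u k) * B j k) ∂γ
          + c * ∫ u, bfun (O i j + ∑ k, X i k * Θ j k +
              ∑ k, (Q.1 i k + Q.2 i k * u k) * B j k) ∂γ := by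
        rw [integral_add (hIP.const_mul a) (hIQ.const_mul c),
          MeasureTheory.integral_const_mul, MeasureTheory.integral_const_mul]
      have hY : Y i j * (O i j + ∑ k, X i k * Θ j k + ∑ k, (a * P.1 i k + c * Q.1 i k) * B j k)
          = a * (Y i j * (O i j + ∑ k, X i k * Θ j k + ∑ k, P.1 i k * B j k))
          + c * (Y i j * (O i j + ∑ k, X i k * Θ j k + ∑ k, Q.1 i k * B j k)) := by
        rw [hlin]
        linear_combination (Y i j * (O i j + ∑ k, X i k * Θ j k)) * hac.symm
      rw [hY]
      linarith [h1.trans_eq h2]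
    have hq : ∀ (i : Fin n) (k : Fin q),
        (a * P.1 i k + c * Q.1 i k) ^ 2 + (a * P.2 i k + c * Q.2 i k) ^ 2 -
            2 * Real.log (a * P.2 i k + c * Q.2 i k) - 1
        ≤ a * (P.1 i k ^ 2 + P.2 i k ^ 2 - 2 * Real.log (P.2 i k) - 1)
        + c * (Q.1 i k ^ 2 + Q.2 i k ^ 2 - 2 * Real.log (Q.2 i k) - 1) := by
      intro i k
      have h1 : (a * P.1 i k + c * Q.1 i k) ^ 2 ≤ a * P.1 i k ^ 2 + c * Q.1 i k ^ 2 := by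
        nlinarith [sq_nonneg (P.1 i k - Q.1 i k), mul_nonneg ha hc]
      have h2 : (a * P.2 i k + c * Q.2 i k) ^ 2 ≤ a * P.2 i k ^ 2 + c * Q.2 i k ^ 2 := by
        nlinarith [sq_nonneg (P.2 i k - Q.2 i k), mul_nonneg ha hc]
      have h3 : a * Real.log (P.2 i k) + c * Real.log (Q.2 i k)
          ≤ Real.log (a * P.2 i k + c * Q.2 i k) := by
        simpa [smul_eq_mul] using
          strictConcaveOn_log_Ioi.concaveOn.2 (hP i k) (hQ i k) ha hc hac
      linarith
    have hS1 : a * (∑ i, ∑ j, (Y i j * (O i j + ∑ k, X i k * Θ j k + ∑ k, P.1 i k * B j k) -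
              ∫ u, bfun (O i j + ∑ k, X i k * Θ j k +
                ∑ k, (P.1 i k + P.2 i k * u k) * B j k) ∂γ))
        + c * (∑ i, ∑ j, (Y i j * (O i j + ∑ k, X i k * Θ j k + ∑ k, Q.1 i k * B j k) -
              ∫ u, bfun (O i j + ∑ k, X i k * Θ j k +
                ∑ k, (Q.1 i k + Q.2 i k * u k) * B j k) ∂γ))
        ≤ ∑ i, ∑ j, (Y i j * (O i j + ∑ k, X i k * Θ j k +
              ∑ k, (a * P.1 i k + c * Q.1 i k) * B j k) -
            ∫ u, bfun (O i j + ∑ k, X i k * Θ j k +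
              ∑ k, (a * P.1 i k + c * Q.1 i k + (a * P.2 i k + c * Q.2 i k) * u k) * B j k) ∂γ) := by
      rw [Finset.mul_sum, Finset.mul_sum, ← Finset.sum_add_distrib]
      refine Finset.sum_le_sum fun i _ => ?_
      rw [Finset.mul_sum, Finset.mul_sum, ← Finset.sum_add_distrib]
      exact Finset.sum_le_sum fun j _ => hterm i j
    have hS2 : ∑ i, ∑ k, ((a * P.1 i k + c * Q.1 i k) ^ 2 + (a * P.2 i k + c * Q.2 i k) ^ 2 -
            2 * Real.log (a * P.2 i k + c * Q.2 i k) - 1)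
        ≤ a * (∑ i, ∑ k, (P.1 i k ^ 2 + P.2 i k ^ 2 - 2 * Real.log (P.2 i k) - 1))
        + c * (∑ i, ∑ k, (Q.1 i k ^ 2 + Q.2 i k ^ 2 - 2 * Real.log (Q.2 i k) - 1)) := by
      rw [Finset.mul_sum, Finset.mul_sum, ← Finset.sum_add_distrib]
      refine Finset.sum_le_sum fun i _ => ?_
      rw [Finset.mul_sum, Finset.mul_sum, ← Finset.sum_add_distrib]
      exact Finset.sum_le_sum fun k _ => hq i k
    have hKY : a * KY + c * KY = KY := by rw [← add_mul, hac, one_mul]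
    nlinarith [hS1, hS2, hKY, ha, hc]
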